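/- Let 1 < r ≤ 2 and λ₀ > 0. Let (A_n)_{n≥0} and (B_n)_{n≥0} be stochastic processes adapted to a filtration (F_n)_{n≥0} such that A₀ = 0, B_n > 0 and B_n is nondecreasing in n for n ≥ 1, and such that for every 0 < λ < λ₀ the process ( exp( λA_n − (λB_n)^r/r ) )_{n ≥ 0} is a supermartingale with mean ≤ 1. Then, almost surely on the event { lim_{n→∞} B_n = ∞ }, limsup_{n→∞} A_n / ( B_n·(log log B_n)^{(r−1)/r} ) ≤ ( r/(r−1) )^{(r−1)/r}. -/

import Mathlib

open MeasureTheory Filter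

lemma ville_aux {Ω : Type*} {mΩ : MeasurableSpace Ω} {μ : Measure Ω}
    [IsProbabilityMeasure μ] {ℱ : Filtration ℕ mΩ}
    {M : ℕ → Ω → ℝ} (hM : Supermartingale M ℱ μ) (hnn : ∀ n ω, 0 ≤ M n ω)
    (h0 : ∫ ω, M 0 ω ∂μ ≤ 1) {ε : ℝ} (hε : 0 < ε) (n : ℕ) :
    μ {ω | ∃ k ≤ n, ε ≤ M k ω} ≤ ENNReal.ofReal (1 / ε) := by
  classical
  set τ : Ω → WithTop ℕ := fun ω => (hittingBtwn M (Set.Ici ε) 0 n ω : ℕ) with hτdef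
  have hτ : IsStoppingTime ℱ τ := hM.stronglyAdapted.adapted.isStoppingTime_hittingBtwn measurableSet_Ici
  have hτle : ∀ ω, τ ω ≤ n := fun ω => WithTop.coe_le_coe.2 (hittingBtwn_le ω)
  have hsub : Submartingale (-M) ℱ μ := hM.neg
  have hmono := hsub.expected_stoppedValue_mono (isStoppingTime_const ℱ 0) hτ
    (fun ω => WithTop.coe_le_coe.2 (Nat.zero_le _)) hτle
  have hsv_int : Integrable (stoppedValue M τ) μ := by
    have := hsub.integrable_stoppedValue hτ hτle
    have h2 : stoppedValue M τ = -(stoppedValue (-M) τ) := by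
      funext ω; simp [stoppedValue]
    rw [h2]; exact this.neg
  have hint : ∫ ω, stoppedValue M τ ω ∂μ ≤ 1 := by
    have h1 : ∫ ω, stoppedValue (-M) (fun _ => ((0 : ℕ) : WithTop ℕ)) ω ∂μ = -∫ ω, M 0 ω ∂μ := by
      rw [show (stoppedValue (-M) fun _ => ((0 : ℕ) : WithTop ℕ)) = fun ω => -(M 0 ω) from rfl, integral_neg]
    have h2 : ∫ ω, stoppedValue (-M) τ ω ∂μ = -∫ ω, stoppedValue M τ ω ∂μ := by
      rw [show stoppedValue (-M) τ = fun ω => -(stoppedValue M τ ω) from rfl, integral_neg]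
    erw [h1, h2, neg_le_neg_iff] at hmono
    exact le_trans hmono h0
  set S : Set Ω := {ω | ∃ k ≤ n, ε ≤ M k ω} with hSdef
  have hSmeas : MeasurableSet S := by
    have : S = ⋃ k ∈ Finset.range (n + 1), {ω | ε ≤ M k ω} := by
      ext ω
      simp only [hSdef, Set.mem_setOf_eq, Set.mem_iUnion, Finset.mem_range, Nat.lt_succ_iff]
      exact ⟨fun ⟨k, hk, h⟩ => ⟨k, hk, h⟩, fun ⟨k, hk, h⟩ => ⟨k, hk, h⟩⟩
    rw [this]
    exact MeasurableSet.biUnion (Finset.range (n + 1)).countable_toSet fun k _ =>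
      measurableSet_le measurable_const ((hM.stronglyMeasurable k).measurable.le (ℱ.le k))
  have hSsv : ∀ ω ∈ S, ε ≤ stoppedValue M τ ω := by
    intro ω hω
    obtain ⟨k, hk, hεk⟩ := hω
    exact stoppedValue_hittingBtwn_mem ⟨k, ⟨Nat.zero_le _, hk⟩, hεk⟩
  have h1 : ε * (μ S).toReal ≤ ∫ ω in S, stoppedValue M τ ω ∂μ :=
    by have h := setIntegral_ge_of_const_le hSmeas (measure_ne_top μ S) hSsv hsv_int.integrableOn
       rw [smul_eq_mul, mul_comm] at h; exact h
  have h2 : ∫ ω in S, stoppedValue M τ ω ∂μ ≤ ∫ ω, stoppedValue M τ ω ∂μ :=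
    setIntegral_le_integral hsv_int (Filter.Eventually.of_forall fun ω => hnn _ ω)
  have h3 : (μ S).toReal ≤ 1 / ε := by
    rw [le_div_iff₀ hε, mul_comm]
    exact le_trans h1 (le_trans h2 hint)
  calc μ S = ENNReal.ofReal (μ S).toReal := (ENNReal.ofReal_toReal (measure_ne_top μ S)).symm
    _ ≤ ENNReal.ofReal (1 / ε) := ENNReal.ofReal_le_ofReal h3

lemma ville {Ω : Type*} {mΩ : MeasurableSpace Ω} {μ : Measure Ω}
    [IsProbabilityMeasure μ] {ℱ : Filtration ℕ mΩ}
    {M : ℕ → Ω → ℝ} (hM : Supermartingale M ℱ μ) (hnn : ∀ n ω, 0 ≤ M n ω)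
    (h0 : ∫ ω, M 0 ω ∂μ ≤ 1) {ε : ℝ} (hε : 0 < ε) :
    μ {ω | ∃ k, ε ≤ M k ω} ≤ ENNReal.ofReal (1 / ε) := by
  have : {ω | ∃ k, ε ≤ M k ω} = ⋃ n, {ω | ∃ k ≤ n, ε ≤ M k ω} := by
    ext ω
    simp only [Set.mem_setOf_eq, Set.mem_iUnion]
    exact ⟨fun ⟨k, h⟩ => ⟨k, k, le_refl k, h⟩, fun ⟨n, k, _, h⟩ => ⟨k, h⟩⟩
  rw [this, Directed.measure_iUnion]
  · exact iSup_le fun n => ville_aux hM hnn h0 hε n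
  · intro a b
    refine ⟨max a b, fun ω ⟨k, hk, h⟩ => ⟨k, hk.trans (le_max_left a b), h⟩,
      fun ω ⟨k, hk, h⟩ => ⟨k, hk.trans (le_max_right a b), h⟩⟩

lemma tail_bound {Ω : Type*} {mΩ : MeasurableSpace Ω} {μ : Measure Ω}
    [IsProbabilityMeasure μ] {ℱ : Filtration ℕ mΩ}
    {r lam0 : ℝ} (hr1 : 1 < r) (hlam0 : 0 < lam0)
    {A B : ℕ → Ω → ℝ}
    (hBpos : ∀ n, 1 ≤ n → ∀ ω, 0 < B n ω)
    (hsm : ∀ lam : ℝ, 0 < lam → lam < lam0 →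
      Supermartingale
        (fun n ω => Real.exp (lam * A n ω - (lam * B n ω) ^ r / r)) ℱ μ ∧
      ∀ n, ∫ ω, Real.exp (lam * A n ω - (lam * B n ω) ^ r / r) ∂μ ≤ 1)
    {lam a b : ℝ} (hlam : 0 < lam) (hlam' : lam < lam0) :
    μ {ω | ∃ n, 1 ≤ n ∧ B n ω ≤ b ∧ a ≤ A n ω}
      ≤ ENNReal.ofReal (Real.exp (-(lam * a - (lam * b) ^ r / r))) := by
  obtain ⟨hSM, hInt⟩ := hsm lam hlam hlam'
  set x : ℝ := lam * a - (lam * b) ^ r / r with hx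
  have hsubset : {ω | ∃ n, 1 ≤ n ∧ B n ω ≤ b ∧ a ≤ A n ω}
      ⊆ {ω | ∃ k, Real.exp x ≤ Real.exp (lam * A k ω - (lam * B k ω) ^ r / r)} := by
    rintro ω ⟨n, hn1, hnB, hnA⟩
    refine ⟨n, Real.exp_le_exp.2 ?_⟩
    have h1 : lam * a ≤ lam * A n ω := mul_le_mul_of_nonneg_left hnA hlam.le
    have h2 : (lam * B n ω) ^ r ≤ (lam * b) ^ r :=
      Real.rpow_le_rpow (mul_nonneg hlam.le (hBpos n hn1 ω).le)
        (mul_le_mul_of_nonneg_left hnB hlam.le) (by linarith)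
    have h3 : (lam * B n ω) ^ r / r ≤ (lam * b) ^ r / r :=
      div_le_div_of_nonneg_right h2 (by linarith) |>.trans_eq rfl
    linarith
  calc μ {ω | ∃ n, 1 ≤ n ∧ B n ω ≤ b ∧ a ≤ A n ω}
      ≤ μ {ω | ∃ k, Real.exp x ≤ Real.exp (lam * A k ω - (lam * B k ω) ^ r / r)} :=
        measure_mono hsubset
    _ ≤ ENNReal.ofReal (1 / Real.exp x) :=
        ville hSM (fun n ω => (Real.exp_pos _).le) (hInt 0) (Real.exp_pos x)
    _ = ENNReal.ofReal (Real.exp (-x)) := by rw [Real.exp_neg, one_div]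

lemma key_delta {Ω : Type*} {mΩ : MeasurableSpace Ω} {μ : Measure Ω}
    [IsProbabilityMeasure μ] (ℱ : Filtration ℕ mΩ)
    {r lam0 : ℝ} (hr1 : 1 < r) (hlam0 : 0 < lam0)
    {A B : ℕ → Ω → ℝ}
    (hBpos : ∀ n, 1 ≤ n → ∀ ω, 0 < B n ω)
    (hsm : ∀ lam : ℝ, 0 < lam → lam < lam0 →
      Supermartingale
        (fun n ω => Real.exp (lam * A n ω - (lam * B n ω) ^ r / r)) ℱ μ ∧
      ∀ n, ∫ ω, Real.exp (lam * A n ω - (lam * B n ω) ^ r / r) ∂μ ≤ 1)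
    {δ : ℝ} (hδ : 0 < δ) :
    ∀ᵐ ω ∂μ, Tendsto (fun n => B n ω) atTop atTop →
      Filter.limsup (fun n =>
          ((A n ω / (B n ω * (Real.log (Real.log (B n ω))) ^ ((r - 1) / r)) : ℝ) : EReal))
        atTop ≤ (((1 + δ) * ((r / (r - 1)) ^ ((r - 1) / r)) : ℝ) : EReal) := by
  have hr0 : (0:ℝ) < r := by linarith
  have hrm1 : (0:ℝ) < r - 1 := by linarith
  set q : ℝ := (r - 1) / r with hq
  have hq0 : 0 < q := div_pos hrm1 hr0
  have hq1 : q < 1 := (div_lt_one hr0).2 (by linarith)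
  have hrCq : r / (r - 1) = 1 / q := by rw [hq, one_div_div]
  have hrC1 : (1:ℝ) < r / (r - 1) := (one_lt_div hrm1).2 (by linarith)
  set C : ℝ := (r / (r - 1)) ^ q with hC
  have hC0 : 0 < C := Real.rpow_pos_of_pos (by linarith) q
  set c : ℝ := (1 + δ) / (1 + δ / 2) with hc
  have hc1 : 1 < c := (one_lt_div (by linarith)).2 (by linarith)
  have hc0 : 0 < c := lt_trans one_pos hc1
  set logc : ℝ := Real.log c with hlogc
  have hlogc0 : 0 < logc := Real.log_pos hc1
  set L : ℕ → ℝ := fun k => Real.log ((k : ℝ) * logc) with hL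
  set a : ℕ → ℝ := fun k => (1 + δ) * C * c ^ k * (L k) ^ q with ha
  set b : ℕ → ℝ := fun k => c ^ (k + 1) with hb
  set lam : ℕ → ℝ := fun k => (a k / (b k) ^ r) ^ (1 / (r - 1)) with hlam
  set θ : ℝ := ((1 + δ) / c) ^ (1 / q) with hθ
  have hθpos : 0 < θ := Real.rpow_pos_of_pos (div_pos (by linarith) hc0) _
  have hθ1 : 1 < θ := by
    have hdc : (1 + δ) / c = 1 + δ / 2 := by
      rw [hc]; field_simp
    rw [hθ, hdc]
    exact (Real.one_lt_rpow_iff_of_pos (by linarith)).2 (Or.inl ⟨by linarith, by positivity⟩)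
  -- positivity facts for k with 0 < L k
  have hLloglog : ∀ k : ℕ, Real.log (Real.log (c ^ k)) = L k := by
    intro k; rw [Real.log_pow]
  -- the key identity
  have hkey : ∀ k : ℕ, 0 < L k →
      lam k * a k - (lam k * b k) ^ r / r = θ * L k := by
    intro k hLk
    have hLq : 0 < (L k) ^ q := Real.rpow_pos_of_pos hLk q
    have hak : 0 < a k :=
      mul_pos (mul_pos (mul_pos (by linarith) hC0) (pow_pos hc0 k)) hLq
    have hbk : 0 < b k := pow_pos hc0 (k + 1)
    have hbr : 0 < (b k) ^ r := Real.rpow_pos_of_pos hbk r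
    have hyk : 0 < a k / (b k) ^ r := div_pos hak hbr
    have hlamk : 0 < lam k := Real.rpow_pos_of_pos hyk _
    have hwe : (r - 1) * Real.log (lam k) = Real.log (a k) - r * Real.log (b k) := by
      rw [show lam k = (a k / (b k) ^ r) ^ (1 / (r - 1)) from rfl,
        Real.log_rpow hyk, Real.log_div hak.ne' hbr.ne', Real.log_rpow hbk]
      field_simp
    have hwex : Real.log (lam k) = (Real.log (a k) - r * Real.log (b k)) / (r - 1) := by
      field_simp
      linarith [hwe]
    -- step 1 : (lam k * b k) ^ r = lam k * a k
    have heq1 : (lam k * b k) ^ r = lam k * a k := by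
      have hlog : Real.log ((lam k * b k) ^ r) = Real.log (lam k * a k) := by
        rw [Real.log_rpow (mul_pos hlamk hbk), Real.log_mul hlamk.ne' hbk.ne',
          Real.log_mul hlamk.ne' hak.ne', hwex]
        field_simp
        ring
      exact Real.log_injOn_pos (Set.mem_Ioi.2 (Real.rpow_pos_of_pos (mul_pos hlamk hbk) r))
        (Set.mem_Ioi.2 (mul_pos hlamk hak)) hlog
    -- step 2 : lam k * a k = (1/q) * θ * L k
    have heq2 : lam k * a k = (1 / q) * θ * (L k) := by
      have hCq : Real.log (r / (r - 1)) = -Real.log q := by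
        rw [hrCq, one_div, Real.log_inv]
      have f1 : Real.log (a k) = Real.log (1 + δ) + q * (-Real.log q) + (k : ℝ) * logc
          + q * Real.log (L k) := by
        rw [show a k = (1 + δ) * C * c ^ k * (L k) ^ q from rfl,
          Real.log_mul (by positivity) hLq.ne', Real.log_mul (by positivity) (pow_pos hc0 k).ne',
          Real.log_mul (by positivity) hC0.ne', Real.log_pow, hC,
          Real.log_rpow (by linarith : (0:ℝ) < r / (r - 1)), Real.log_rpow hLk, hCq]
      have f2 : Real.log (b k) = ((k : ℝ) + 1) * logc := by
        rw [show b k = c ^ (k + 1) from rfl, Real.log_pow]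
        push_cast
        ring
      have f4 : Real.log θ = (1 / q) * (Real.log (1 + δ) - logc) := by
        rw [hθ, Real.log_rpow (div_pos (by linarith) hc0),
          Real.log_div (by linarith : (1 + δ : ℝ) ≠ 0) hc0.ne']
      have f6 : Real.log ((1 / q) * θ * (L k)) = -Real.log q + Real.log θ + Real.log (L k) := by
        rw [Real.log_mul (mul_pos (by positivity) hθpos).ne' hLk.ne',
          Real.log_mul (by positivity : (1 / q : ℝ) ≠ 0) hθpos.ne', one_div, Real.log_inv]
      have hlog : Real.log (lam k * a k) = Real.log ((1 / q) * θ * (L k)) := by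
        rw [Real.log_mul hlamk.ne' hak.ne', f6, f4, hwex, f1, f2, hq]
        have hl1 : (0:ℝ) < 1 + δ := by linarith
        field_simp
        ring
      exact Real.log_injOn_pos (Set.mem_Ioi.2 (mul_pos hlamk hak))
        (Set.mem_Ioi.2 (mul_pos (mul_pos (by positivity) hθpos) hLk)) hlog
    rw [heq1, heq2]
    have hqiq : q * (1 / q) = 1 := by field_simp
    calc (1 / q) * θ * L k - (1 / q) * θ * L k / r
        = (1 - 1/r) * ((1 / q) * θ * L k) := by ring
      _ = q * ((1 / q) * θ * L k) := by
          rw [show (1 : ℝ) - 1/r = q by rw [hq]; field_simp]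
      _ = θ * L k := by
          calc q * ((1 / q) * θ * L k) = (q * (1 / q)) * (θ * L k) := by ring
            _ = θ * L k := by rw [hqiq, one_mul]
  -- lam tends to 0
  have hlam_tendsto : Tendsto lam atTop (nhds 0) := by
    set ρ : ℝ := c ^ (1 - r) with hρ
    have hρ0 : 0 < ρ := Real.rpow_pos_of_pos hc0 _
    have hρ1 : ρ < 1 := Real.rpow_lt_one_of_one_lt_of_neg hc1 (by linarith)
    have hklogc : Tendsto (fun k : ℕ => (k : ℝ) * logc) atTop atTop :=
      Tendsto.atTop_mul_const hlogc0 tendsto_natCast_atTop_atTop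
    have hLbig : ∀ᶠ k : ℕ in atTop, 1 ≤ L k := by
      filter_upwards [hklogc.eventually_ge_atTop (Real.exp 1)] with k hk
      rw [hL]
      calc (1:ℝ) = Real.log (Real.exp 1) := (Real.log_exp 1).symm
        _ ≤ Real.log ((k:ℝ) * logc) :=
          Real.log_le_log (Real.exp_pos 1) hk
    have hybound : ∀ᶠ k : ℕ in atTop,
        a k / (b k) ^ r ≤ ((1 + δ) * C * logc) * ((k : ℝ) * ρ ^ k)
        ∧ 0 ≤ a k / (b k) ^ r := by
      filter_upwards [hLbig, hklogc.eventually_ge_atTop 1] with k hL1 hkl1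
      have hL0 : (0:ℝ) < L k := lt_of_lt_of_le one_pos hL1
      have hck : (0:ℝ) < c ^ k := pow_pos hc0 k
      have hbk : (0:ℝ) < b k := pow_pos hc0 (k + 1)
      have hbr : (0:ℝ) < (b k) ^ r := Real.rpow_pos_of_pos hbk r
      have hkr : (0:ℝ) < c ^ ((k : ℝ) * r) := Real.rpow_pos_of_pos hc0 _
      constructor
      · -- numerator bound
        have hnum : a k ≤ (1 + δ) * C * c ^ k * ((k : ℝ) * logc) := by
          have h1 : (L k) ^ q ≤ L k := by
            calc (L k) ^ q ≤ (L k) ^ (1:ℝ) := Real.rpow_le_rpow_of_exponent_le hL1 hq1.le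
              _ = L k := Real.rpow_one _
          have h2 : L k ≤ (k : ℝ) * logc := by
            rw [hL]
            exact (Real.log_le_sub_one_of_pos (by linarith)).trans (by linarith)
          have : (L k) ^ q ≤ (k : ℝ) * logc := h1.trans h2
          have hcc : (0:ℝ) ≤ (1 + δ) * C * c ^ k := by positivity
          calc a k = (1 + δ) * C * c ^ k * (L k) ^ q := rfl
            _ ≤ (1 + δ) * C * c ^ k * ((k : ℝ) * logc) :=
              mul_le_mul_of_nonneg_left this hcc
        have hden : c ^ ((k : ℝ) * r) ≤ (b k) ^ r := by
          calc c ^ ((k : ℝ) * r) = (c ^ k) ^ r := by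
                rw [← Real.rpow_natCast c k, ← Real.rpow_mul hc0.le]
            _ ≤ (b k) ^ r :=
              Real.rpow_le_rpow hck.le (pow_le_pow_right₀ hc1.le (Nat.le_succ k)) (by linarith)
        have hstep : a k / (b k) ^ r ≤
            ((1 + δ) * C * c ^ k * ((k : ℝ) * logc)) / c ^ ((k : ℝ) * r) := by
          apply div_le_div₀ (by positivity) hnum hkr hden
        refine hstep.trans_eq ?_
        have hrhok : (ρ : ℝ) ^ k = c ^ (k : ℝ) / c ^ ((k : ℝ) * r) := by
          rw [hρ, ← Real.rpow_natCast (c ^ (1 - r)) k, ← Real.rpow_mul hc0.le,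
            ← Real.rpow_sub hc0]
          congr 1
          ring
        rw [hrhok, Real.rpow_natCast]
        field_simp
      · positivity
    have hktend : Tendsto (fun k : ℕ => (k : ℝ) * ρ ^ k) atTop (nhds 0) := by
      have hs : Summable (fun k : ℕ => (k : ℝ) * ρ ^ k) := by
        have := summable_pow_mul_geometric_of_norm_lt_one 1
          (by rw [Real.norm_eq_abs, abs_of_pos hρ0]; exact hρ1 : ‖ρ‖ < 1)
        simpa [pow_one] using this
      exact hs.tendsto_atTop_zero
    have hytend : Tendsto (fun k : ℕ => a k / (b k) ^ r) atTop (nhds 0) := by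
      have htend2 : Tendsto (fun k : ℕ => ((1 + δ) * C * logc) * ((k : ℝ) * ρ ^ k))
          atTop (nhds 0) := by
        have := hktend.const_mul ((1 + δ) * C * logc)
        simpa using this
      exact squeeze_zero' (hybound.mono fun k h => h.2) (hybound.mono fun k h => h.1) htend2
    have hcont : ContinuousAt (fun x : ℝ => x ^ (1 / (r - 1))) 0 :=
      Real.continuousAt_rpow_const 0 _ (Or.inr (by positivity))
    have := hcont.tendsto.comp hytend
    rw [Real.zero_rpow (by positivity : (1 / (r - 1) : ℝ) ≠ 0)] at this
    exact this
  -- main body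
  set E : ℕ → Set Ω := fun k => {ω | ∃ n, 1 ≤ n ∧ B n ω ≤ b k ∧ a k ≤ A n ω} with hE
  have hklogc : Tendsto (fun k : ℕ => (k : ℝ) * logc) atTop atTop :=
    Tendsto.atTop_mul_const hlogc0 tendsto_natCast_atTop_atTop
  have hev : ∀ᶠ k : ℕ in atTop, (1 < (k : ℝ) * logc) ∧ lam k < lam0 :=
    (hklogc.eventually_gt_atTop 1).and (hlam_tendsto.eventually_lt_const hlam0)
  obtain ⟨K0, hK0⟩ := eventually_atTop.1 hev
  have hμE : ∀ k, K0 ≤ k → μ (E k) ≤ ENNReal.ofReal (((k : ℝ) * logc) ^ (-θ)) := by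
    intro k hk
    obtain ⟨h1, hlm0⟩ := hK0 k hk
    have hLk : 0 < L k := Real.log_pos h1
    have hLq : 0 < (L k) ^ q := Real.rpow_pos_of_pos hLk q
    have hak : 0 < a k :=
      mul_pos (mul_pos (mul_pos (by linarith) hC0) (pow_pos hc0 k)) hLq
    have hbk : 0 < b k := pow_pos hc0 (k + 1)
    have hbr : 0 < (b k) ^ r := Real.rpow_pos_of_pos hbk r
    have hlamk : 0 < lam k := Real.rpow_pos_of_pos (div_pos hak hbr) _
    have htb := tail_bound (A := A) (B := B) hr1 hlam0 hBpos hsm hlamk hlm0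
      (a := a k) (b := b k)
    rw [hkey k hLk] at htb
    have hexp : Real.exp (-(θ * L k)) = ((k : ℝ) * logc) ^ (-θ) := by
      rw [Real.rpow_def_of_pos (by linarith : (0:ℝ) < (k : ℝ) * logc)]
      exact congrArg Real.exp (by
        rw [show L k = Real.log ((k : ℝ) * logc) from rfl]; ring)
    rw [hexp] at htb
    exact htb
  have hsummable : Summable (fun k : ℕ => ((k : ℝ) * logc) ^ (-θ)) := by
    have h1 : Summable (fun k : ℕ => (k : ℝ) ^ (-θ) * logc ^ (-θ)) :=
      (Real.summable_nat_rpow.2 (by linarith)).mul_right _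
    exact h1.congr fun k => (Real.mul_rpow (Nat.cast_nonneg k) hlogc0.le).symm
  have hBC : μ (limsup (fun j => E (K0 + j)) atTop) = 0 := by
    apply measure_limsup_atTop_eq_zero
    have hshift : Summable (fun j : ℕ => (((K0 + j : ℕ) : ℝ) * logc) ^ (-θ)) := by
      have h2 : Summable (fun j : ℕ => (((j + K0 : ℕ) : ℝ) * logc) ^ (-θ)) :=
        (summable_nat_add_iff (f := fun k : ℕ => ((k : ℝ) * logc) ^ (-θ)) K0).2 hsummable
      exact h2.congr fun j => by rw [Nat.add_comm]
    have hle : (∑' j, μ (E (K0 + j)))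
        ≤ ENNReal.ofReal (∑' j, (((K0 + j : ℕ) : ℝ) * logc) ^ (-θ)) := by
      rw [ENNReal.ofReal_tsum_of_nonneg
        (fun j => Real.rpow_nonneg (by positivity) _) hshift]
      exact ENNReal.tsum_le_tsum fun j => hμE _ (Nat.le_add_right _ _)
    exact ne_top_of_le_ne_top ENNReal.ofReal_ne_top hle
  have hae1 : ∀ᵐ ω ∂μ, ∃ K1, ∀ k, K1 ≤ k → ω ∉ E k := by
    filter_upwards [measure_eq_zero_iff_ae_notMem.1 hBC] with ω hω
    rw [mem_limsup_iff_frequently_mem, Filter.not_frequently] at hω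
    obtain ⟨J, hJ⟩ := eventually_atTop.1 hω
    refine ⟨K0 + J, fun k hk => ?_⟩
    have h2 : ω ∉ E (K0 + (k - K0)) := hJ (k - K0) (by omega)
    rwa [show K0 + (k - K0) = k by omega] at h2
  filter_upwards [hae1] with ω hω hBtend
  obtain ⟨K1, hK1⟩ := hω
  obtain ⟨K2, hK2⟩ := eventually_atTop.1
    ((tendsto_pow_atTop_atTop_of_one_lt hc1).eventually_ge_atTop (Real.exp (Real.exp 1)))
  set K := max K1 K2 with hK
  have hev_n : ∀ᶠ n : ℕ in atTop, c ^ K ≤ B n ω ∧ 1 ≤ n :=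
    (hBtend.eventually_ge_atTop (c ^ K)).and (eventually_ge_atTop 1)
  refine Filter.limsup_le_of_le (by isBoundedDefault) ?_
  filter_upwards [hev_n] with n hn
  obtain ⟨htK, hn1⟩ := hn
  rw [EReal.coe_le_coe_iff]
  set t : ℝ := B n ω with hteq
  have ht0 : 0 < t := hBpos n hn1 ω
  have hee : Real.exp (Real.exp 1) ≤ c ^ K := hK2 K (le_max_right _ _)
  have hee1 : (1:ℝ) < Real.exp (Real.exp 1) := by
    have h1 := Real.add_one_le_exp (Real.exp 1)
    have h2 := Real.exp_pos 1
    linarith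
  have ht1 : 1 < t := lt_of_lt_of_le hee1 (hee.trans htK)
  set k : ℕ := ⌊Real.log t / logc⌋₊ with hkdef
  have hlogt0 : 0 ≤ Real.log t := Real.log_nonneg ht1.le
  have hfl1 : (k : ℝ) ≤ Real.log t / logc := Nat.floor_le (by positivity)
  have hfl2 : Real.log t / logc < k + 1 := Nat.lt_floor_add_one _
  have hck_le : c ^ k ≤ t := by
    have h1 : (k : ℝ) * logc ≤ Real.log t := (le_div_iff₀ hlogc0).1 hfl1
    have h2 : Real.log (c ^ k) ≤ Real.log t := by rw [Real.log_pow]; exact h1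
    exact (Real.log_le_log_iff (pow_pos hc0 k) ht0).1 h2
  have ht_lt : t < c ^ (k + 1) := by
    have h1 : Real.log t < ((k : ℕ) + 1 : ℝ) * logc := by
      rw [← div_lt_iff₀ hlogc0]; exact_mod_cast hfl2
    have h2 : Real.log t < Real.log (c ^ (k + 1)) := by
      rw [Real.log_pow]; push_cast; exact h1
    exact (Real.log_lt_log_iff ht0 (pow_pos hc0 (k + 1))).1 h2
  have hKk : K ≤ k := by
    have h1 : c ^ K < c ^ (k + 1) := lt_of_le_of_lt htK ht_lt
    have h2 : K < k + 1 := (pow_lt_pow_iff_right₀ hc1).1 h1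
    omega
  have hcek : Real.exp (Real.exp 1) ≤ c ^ k :=
    le_trans hee (pow_le_pow_right₀ hc1.le hKk)
  have hcet : Real.exp (Real.exp 1) ≤ t := hcek.trans hck_le
  have hlogck : Real.exp 1 ≤ Real.log (c ^ k) := by
    calc Real.exp 1 = Real.log (Real.exp (Real.exp 1)) := (Real.log_exp _).symm
      _ ≤ Real.log (c ^ k) :=
        (Real.log_le_log_iff (Real.exp_pos _) (pow_pos hc0 k)).2 hcek
  have hlogt : Real.exp 1 ≤ Real.log t := by
    calc Real.exp 1 = Real.log (Real.exp (Real.exp 1)) := (Real.log_exp _).symm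
      _ ≤ Real.log t := (Real.log_le_log_iff (Real.exp_pos _) ht0).2 hcet
  have he0 : (0:ℝ) < Real.exp 1 := Real.exp_pos 1
  have hLk1 : 1 ≤ L k := by
    rw [← hLloglog k]
    calc (1:ℝ) = Real.log (Real.exp 1) := (Real.log_exp 1).symm
      _ ≤ Real.log (Real.log (c ^ k)) :=
        (Real.log_le_log_iff he0 (lt_of_lt_of_le he0 hlogck)).2 hlogck
  have hLt1 : 1 ≤ Real.log (Real.log t) := by
    calc (1:ℝ) = Real.log (Real.exp 1) := (Real.log_exp 1).symm
      _ ≤ Real.log (Real.log t) :=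
        (Real.log_le_log_iff he0 (lt_of_lt_of_le he0 hlogt)).2 hlogt
  have hnotE : ω ∉ E k := hK1 k (le_trans (le_max_left _ _) hKk)
  have hA_lt : A n ω < a k := by
    by_contra h
    push_neg at h
    exact hnotE ⟨n, hn1, ht_lt.le, h⟩
  have hLle : L k ≤ Real.log (Real.log t) := by
    rw [← hLloglog k]
    have h1 : Real.log (c ^ k) ≤ Real.log t :=
      (Real.log_le_log_iff (pow_pos hc0 k) ht0).2 hck_le
    exact (Real.log_le_log_iff (lt_of_lt_of_le he0 hlogck) (lt_of_lt_of_le he0 hlogt)).2 h1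
  have hLqle : (L k) ^ q ≤ (Real.log (Real.log t)) ^ q :=
    Real.rpow_le_rpow (by linarith) hLle hq0.le
  have hDpos : 0 < t * (Real.log (Real.log t)) ^ q :=
    mul_pos ht0 (Real.rpow_pos_of_pos (by linarith) q)
  have hak_le : a k ≤ ((1 + δ) * C) * (t * (Real.log (Real.log t)) ^ q) := by
    have h1 : (1 + δ) * C * c ^ k * (L k) ^ q
        ≤ (1 + δ) * C * t * (Real.log (Real.log t)) ^ q := by
      apply mul_le_mul
      · exact mul_le_mul_of_nonneg_left hck_le (by positivity)
      · exact hLqle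
      · exact Real.rpow_nonneg (by linarith) q
      · positivity
    calc a k = (1 + δ) * C * c ^ k * (L k) ^ q := rfl
      _ ≤ (1 + δ) * C * t * (Real.log (Real.log t)) ^ q := h1
      _ = ((1 + δ) * C) * (t * (Real.log (Real.log t)) ^ q) := by ring
  rw [div_le_iff₀ hDpos]
  calc A n ω ≤ a k := hA_lt.le
    _ ≤ ((1 + δ) * C) * (t * (Real.log (Real.log t)) ^ q) := hak_le
    _ = (1 + δ) * C * (t * (Real.log (Real.log t)) ^ q) := by ring

/-- Corollary 4.2 (discrete time). -/
theorem stmt_14 {Ω : Type*} {mΩ : MeasurableSpace Ω} {μ : Measure Ω}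
    [IsProbabilityMeasure μ] (ℱ : Filtration ℕ mΩ)
    (r lam0 : ℝ) (hr1 : 1 < r) (hr2 : r ≤ 2) (hlam0 : 0 < lam0)
    (A B : ℕ → Ω → ℝ)
    (hAadp : Adapted ℱ A) (hBadp : Adapted ℱ B)
    (hA0 : ∀ ω, A 0 ω = 0)
    (hBpos : ∀ n, 1 ≤ n → ∀ ω, 0 < B n ω)
    (hBmono : ∀ m n : ℕ, 1 ≤ m → m ≤ n → ∀ ω, B m ω ≤ B n ω)
    (hsm : ∀ lam : ℝ, 0 < lam → lam < lam0 →
      Supermartingale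
        (fun n ω => Real.exp (lam * A n ω - (lam * B n ω) ^ r / r)) ℱ μ ∧
      ∀ n, ∫ ω, Real.exp (lam * A n ω - (lam * B n ω) ^ r / r) ∂μ ≤ 1) :
    ∀ᵐ ω ∂μ, Tendsto (fun n => B n ω) atTop atTop →
      Filter.limsup (fun n =>
          ((A n ω / (B n ω * (Real.log (Real.log (B n ω))) ^ ((r - 1) / r)) : ℝ) : EReal))
        atTop ≤ (((r / (r - 1)) ^ ((r - 1) / r) : ℝ) : EReal) := by
  have hmain : ∀ m : ℕ, ∀ᵐ ω ∂μ, Tendsto (fun n => B n ω) atTop atTop →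
      Filter.limsup (fun n =>
          ((A n ω / (B n ω * (Real.log (Real.log (B n ω))) ^ ((r - 1) / r)) : ℝ) : EReal))
        atTop ≤ (((1 + 1 / ((m : ℝ) + 1)) * ((r / (r - 1)) ^ ((r - 1) / r)) : ℝ) : EReal) :=
    fun m => key_delta ℱ hr1 hlam0 hBpos hsm (by positivity : (0:ℝ) < 1 / ((m : ℝ) + 1))
  rw [← MeasureTheory.ae_all_iff] at hmain
  filter_upwards [hmain] with ω hω hB
  have hle : ∀ m : ℕ,
      Filter.limsup (fun n =>
          ((A n ω / (B n ω * (Real.log (Real.log (B n ω))) ^ ((r - 1) / r)) : ℝ) : EReal))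
        atTop ≤ (((1 + 1 / ((m : ℝ) + 1)) * ((r / (r - 1)) ^ ((r - 1) / r)) : ℝ) : EReal) :=
    fun m => hω m hB
  have htend : Tendsto
      (fun m : ℕ => (((1 + 1 / ((m : ℝ) + 1)) * ((r / (r - 1)) ^ ((r - 1) / r)) : ℝ) : EReal))
      atTop (nhds (((r / (r - 1)) ^ ((r - 1) / r) : ℝ) : EReal)) := by
    rw [EReal.tendsto_coe]
    have h1 : Tendsto (fun m : ℕ => (1 + 1 / ((m : ℝ) + 1)) * ((r / (r - 1)) ^ ((r - 1) / r)))
        atTop (nhds ((1 + 0) * ((r / (r - 1)) ^ ((r - 1) / r)))) :=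
      (tendsto_const_nhds.add tendsto_one_div_add_atTop_nhds_zero_nat).mul_const _
    simpa using h1
  exact ge_of_tendsto' htend hle
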